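/- For every generic relaxed σ-scenario 𝒮 = (T,S,μ,τ_T,τ_S,σ), the strict quasi-orthology graph coincides with the equal-divergence-time graph and the chain Θs(𝒮) ⊆ Ψs(𝒮) = 𝔈(𝒮) ⊆ Ψw(𝒮) of subgraph inclusions holds. -/
import Mathlib


/-- A planted phylogenetic rooted tree, encoded by a parent function on a
finite vertex set.  The root `0_T` is a fixed point of `parent`; every vertex
reaches the root by iterating `parent`; the root has exactly one child
(`planted`); and every inner vertex (non-root vertex having a child) has at
least two children (`phylo`). -/
structure PPTree where
  V : Type
  [fintypeV : Fintype V]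
  [decEqV : DecidableEq V]
  root : V
  parent : V → V
  parent_root : parent root = root
  reach : ∀ v : V, ∃ n : ℕ, parent^[n] v = root
  planted : ∃! v : V, v ≠ root ∧ parent v = root
  phylo : ∀ v : V, v ≠ root → (∃ u, parent u = v ∧ u ≠ v) →
      ∃ u w, parent u = v ∧ parent w = v ∧ u ≠ w ∧ u ≠ v ∧ w ≠ v

attribute [instance] PPTree.fintypeV PPTree.decEqV

namespace PPTree

variable (T : PPTree)

/-- `T.le x y` means `x ⪯_T y`, i.e. `y` is an ancestor of `x` (or `x = y`). -/
def le (x y : T.V) : Prop := ∃ n : ℕ, T.parent^[n] x = y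

/-- `T.lt x y` means `x ≺_T y`. -/
def lt (x y : T.V) : Prop := T.le x y ∧ x ≠ y

/-- Leaves are the `⪯_T`-minimal vertices, i.e. vertices without children. -/
def isLeaf (v : T.V) : Prop := ∀ u, T.parent u = v → u = v

/-- Inner vertices: neither leaves nor the planted root. -/
def inner (v : T.V) : Prop := v ≠ T.root ∧ ¬ T.isLeaf v

/-- The last common ancestor of two vertices: the `⪯_T`-minimal common
ancestor. -/
noncomputable def lca (x y : T.V) : T.V :=
  @Classical.epsilon _ ⟨T.root⟩
    fun v => T.le x v ∧ T.le y v ∧ ∀ w, T.le x w → T.le y w → T.le v w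

/-- The last common ancestor of a set of vertices. -/
noncomputable def lcaSet (A : Set T.V) : T.V :=
  @Classical.epsilon _ ⟨T.root⟩
    fun v => (∀ a ∈ A, T.le a v) ∧ ∀ w, (∀ a ∈ A, T.le a w) → T.le v w

/-- `ρ_T`, the unique child of the planted root. -/
noncomputable def rho : T.V := T.planted.choose

theorem rho_ne_root : T.rho ≠ T.root := T.planted.choose_spec.1.1

/-- Edges of `T`, identified with their child endpoint: the vertex `v ≠ 0_T`
represents the edge `(parent v, v)`. -/
abbrev Edge := {v : T.V // v ≠ T.root}

/-- The union `V(T) ∪ E(T)`. -/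
abbrev VE := T.V ⊕ T.Edge

/-- The ancestor order `⪯_T` extended to `V(T) ∪ E(T)`: for an edge `e = uv`
(`u` the parent of `v`), `x ⪯ e` iff `x ⪯ v`, `e ⪯ x` iff `u ⪯ x`, and
`e ⪯ f` iff the child endpoints are comparable accordingly. -/
def leVE : T.VE → T.VE → Prop
  | Sum.inl x, Sum.inl y => T.le x y
  | Sum.inl x, Sum.inr e => T.le x e.1
  | Sum.inr e, Sum.inl y => T.le (T.parent e.1) y
  | Sum.inr e, Sum.inr f => T.le e.1 f.1

def ltVE (a b : T.VE) : Prop := T.leVE a b ∧ a ≠ b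

/-- Two elements of `V(T) ∪ E(T)` are comparable. -/
def cmpVE (a b : T.VE) : Prop := T.leVE a b ∨ T.leVE b a

/-- Membership in `L(T)` for elements of `V(T) ∪ E(T)`. -/
def isLeafVE : T.VE → Prop
  | Sum.inl v => T.isLeaf v
  | Sum.inr _ => False

/-- Map an element of `V(T) ∪ E(T)` to a vertex (an edge `uv` is sent to its
child endpoint `v`). -/
def toVertex : T.VE → T.V
  | Sum.inl v => v
  | Sum.inr e => e.1

end PPTree

/-- Axioms (R0)–(R3) of a reconciliation map `μ : V(T) → V(S) ∪ E(S)`. -/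
structure IsRecon (T S : PPTree) (μ : T.V → S.VE) : Prop where
  R0 : ∀ x, μ x = Sum.inl S.root ↔ x = T.root
  R1 : ∀ x, S.isLeafVE (μ x) ↔ T.isLeaf x
  R2 : ∀ x y, T.lt y x → (∃ u, μ x = Sum.inl u) → (∃ v, μ y = Sum.inl v) → μ x ≠ μ y
  R3 : ∀ x y, T.lt y x → ¬ S.ltVE (μ x) (μ y)

/-- A reconciliation is HGT-free if the images of the endpoints of every edge
of `T` are `⪯_S`-comparable. -/
def IsHGTFree (T S : PPTree) (μ : T.V → S.VE) : Prop :=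
  ∀ v : T.V, v ≠ T.root → S.cmpVE (μ (T.parent v)) (μ v)

/-- `(T,S,μ,σ)` is a σ-reconciliation when `μ` restricted to `L(T)` equals
`σ`. -/
def SigmaCompat (T S : PPTree) (μ : T.V → S.VE) (σ : T.V → S.V) : Prop :=
  ∀ x, T.isLeaf x → μ x = Sum.inl (σ x)

/-- A time map for `T`. -/
def IsTimeMap (T : PPTree) (τ : T.V → ℝ) : Prop :=
  ∀ x y, T.lt x y → τ x < τ y

/-- Axioms (S0)–(S3) of a relaxed scenario `(T,S,μ,τ_T,τ_S)`. -/
structure IsRelaxedScenario (T S : PPTree) (μ : T.V → S.VE)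
    (τT : T.V → ℝ) (τS : S.V → ℝ) : Prop where
  timeT : IsTimeMap T τT
  timeS : IsTimeMap S τS
  S0 : ∀ x, μ x = Sum.inl S.root ↔ x = T.root
  S1 : ∀ x, S.isLeafVE (μ x) ↔ T.isLeaf x
  S2 : ∀ x v, μ x = Sum.inl v → τS v = τT x
  S3 : ∀ x (e : S.Edge), μ x = Sum.inr e → τS e.1 < τT x ∧ τT x < τS (S.parent e.1)

/-- The path in `T` between the leaves `x` and `y` contains an HGT-edge of
the scenario (edges are identified with their child endpoints `w`; the edges
of the path between `x` and `y` are those with `x ⪯ w` or `y ⪯ w`, and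
`w ≺ lca_T(x,y)`; such an edge is an HGT-edge if the images under `μ` of its
endpoints are `⪯_S`-incomparable). -/
def PathHGT (T S : PPTree) (μ : T.V → S.VE) (x y : T.V) : Prop :=
  ∃ w : T.V, (T.le x w ∨ T.le y w) ∧ T.lt w (T.lca x y) ∧
    ¬ S.cmpVE (μ (T.parent w)) (μ w)

/-- `x` and `y` are weak quasi-orthologs: `μ(lca_T(x,y)) ∈ V⁰(S)`. -/
def WeakQuasiOrtholog (T S : PPTree) (μ : T.V → S.VE) (x y : T.V) : Prop :=
  T.isLeaf x ∧ T.isLeaf y ∧ x ≠ y ∧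
    ∃ v : S.V, μ (T.lca x y) = Sum.inl v ∧ v ≠ S.root ∧ ¬ S.isLeaf v

/-- `x` and `y` are weak orthologs: weak quasi-orthologs such that no
HGT-edge lies on the path between `x` and `y`. -/
def WeakOrtholog (T S : PPTree) (μ : T.V → S.VE) (x y : T.V) : Prop :=
  WeakQuasiOrtholog T S μ x y ∧ ¬ PathHGT T S μ x y

/-- `x` and `y` are strict quasi-orthologs:
`μ(lca_T(x,y)) = lca_S(σ(x),σ(y))`. -/
def StrictQuasiOrtholog (T S : PPTree) (μ : T.V → S.VE) (σ : T.V → S.V)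
    (x y : T.V) : Prop :=
  T.isLeaf x ∧ T.isLeaf y ∧ x ≠ y ∧
    μ (T.lca x y) = Sum.inl (S.lca (σ x) (σ y))

/-- `x` and `y` are strict orthologs: strict quasi-orthologs such that no
HGT-edge lies on the path between `x` and `y`. -/
def StrictOrtholog (T S : PPTree) (μ : T.V → S.VE) (σ : T.V → S.V)
    (x y : T.V) : Prop :=
  StrictQuasiOrtholog T S μ σ x y ∧ ¬ PathHGT T S μ x y

/-- Edge `xy` of the equal-divergence-time (EDT) graph `𝔈(𝒮)`: `x,y` are
distinct leaves with `τ_T(lca_T(x,y)) = τ_S(lca_S(σ(x),σ(y)))`. -/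
def EDTEdge (T S : PPTree) (τT : T.V → ℝ) (τS : S.V → ℝ) (σ : T.V → S.V)
    (x y : T.V) : Prop :=
  T.isLeaf x ∧ T.isLeaf y ∧ x ≠ y ∧
    τT (T.lca x y) = τS (S.lca (σ x) (σ y))

/-- A relaxed scenario is generic if `τ_T(lca_T(x,y)) = τ_S(u)` for leaves
`x,y` of `T` and `u ∈ V⁰(S)` implies `μ(lca_T(x,y)) = u`. -/
def IsGeneric (T S : PPTree) (μ : T.V → S.VE) (τT : T.V → ℝ)
    (τS : S.V → ℝ) : Prop :=
  ∀ x y : T.V, T.isLeaf x → T.isLeaf y →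
    ∀ u : S.V, u ≠ S.root → ¬ S.isLeaf u →
      τT (T.lca x y) = τS u → μ (T.lca x y) = Sum.inl u

namespace PPTree

variable (T : PPTree)

lemma le_refl' (x : T.V) : T.le x x := ⟨0, rfl⟩

lemma le_root' (x : T.V) : T.le x T.root := T.reach x

lemma iterate_root (n : ℕ) : T.parent^[n] T.root = T.root :=
  Function.iterate_fixed T.parent_root n

lemma le_trans' {x y z : T.V} (h1 : T.le x y) (h2 : T.le y z) : T.le x z := by
  obtain ⟨n, rfl⟩ := h1
  obtain ⟨m, hm⟩ := h2
  exact ⟨m + n, by rw [Function.iterate_add_apply]; exact hm⟩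

lemma le_antisymm' {x y : T.V} (hxy : T.le x y) (hyx : T.le y x) : x = y := by
  obtain ⟨n, hn⟩ := hxy
  obtain ⟨m, hm⟩ := hyx
  rcases Nat.eq_zero_or_pos n with h0 | h0
  · subst h0; exact hn
  have hp : T.parent^[m + n] x = x := by
    rw [Function.iterate_add_apply, hn, hm]
  obtain ⟨k, hk⟩ := T.reach x
  have hq : ∀ q : ℕ, T.parent^[(m + n) * q] x = x := by
    intro q
    induction q with
    | zero => simp
    | succ q ih => rw [Nat.mul_succ, Function.iterate_add_apply, hp, ih]
  have hkle : k ≤ (m + n) * (k + 1) := by nlinarith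
  have hroot : x = T.root := by
    have h1 : T.parent^[(m + n) * (k + 1)] x = T.root := by
      have hsplit : (m + n) * (k + 1) = ((m + n) * (k + 1) - k) + k := by omega
      rw [hsplit, Function.iterate_add_apply, hk, T.iterate_root]
    rw [hq (k + 1)] at h1
    exact h1
  subst hroot
  rw [← hn, T.iterate_root]

lemma le_leaf' {x y : T.V} (hy : T.isLeaf y) (h : T.le x y) : x = y := by
  obtain ⟨n, hn⟩ := h
  induction n generalizing x with
  | zero => exact hn
  | succ n ih =>
    rw [Function.iterate_succ_apply] at hn
    have hpx := ih hn
    exact hy x hpx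

lemma root_not_leaf' : ¬ T.isLeaf T.root := by
  intro h
  obtain ⟨v, ⟨hv1, hv2⟩, _⟩ := T.planted
  exact hv1 (h v hv2)

lemma leaf_ne_root {x : T.V} (hx : T.isLeaf x) : x ≠ T.root := by
  rintro rfl; exact T.root_not_leaf' hx

lemma le_rho' {x : T.V} (hx : x ≠ T.root) : T.le x T.rho := by
  classical
  have hex : ∃ k : ℕ, T.parent^[k] x = T.root := T.reach x
  set k := Nat.find hex with hkdef
  have hk : T.parent^[k] x = T.root := Nat.find_spec hex
  have hk1 : 1 ≤ k := by
    rcases Nat.eq_zero_or_pos k with h0 | h0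
    · exact absurd (by rw [← hk, h0]; rfl) hx
    · exact h0
  set w := T.parent^[k - 1] x with hwdef
  have hw1 : T.parent w = T.root := by
    have : T.parent^[(k - 1) + 1] x = T.root := by
      have : (k - 1) + 1 = k := by omega
      rw [this]; exact hk
    rw [Function.iterate_succ_apply'] at this
    exact this
  have hw2 : w ≠ T.root := Nat.find_min hex (by omega)
  obtain ⟨v, _, huniq⟩ := T.planted
  have h1 : w = v := huniq w ⟨hw2, hw1⟩
  have h2 : T.rho = v := huniq T.rho ⟨T.rho_ne_root, T.planted.choose_spec.1.2⟩
  exact ⟨k - 1, by rw [← hwdef, h1, ← h2]⟩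

lemma lca_exists (x y : T.V) :
    ∃ v, T.le x v ∧ T.le y v ∧ ∀ w, T.le x w → T.le y w → T.le v w := by
  classical
  have hne : ∃ n : ℕ, T.le y (T.parent^[n] x) := by
    obtain ⟨n, hn⟩ := T.reach x
    exact ⟨n, by rw [hn]; exact T.le_root' y⟩
  refine ⟨T.parent^[Nat.find hne] x, ⟨Nat.find hne, rfl⟩, Nat.find_spec hne, ?_⟩
  rintro w ⟨m, rfl⟩ hyw
  rcases le_or_gt (Nat.find hne) m with h | h
  · exact ⟨m - Nat.find hne, by
      rw [← Function.iterate_add_apply]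
      congr 1
      omega⟩
  · exact absurd hyw (Nat.find_min hne h)

lemma lca_spec (x y : T.V) :
    T.le x (T.lca x y) ∧ T.le y (T.lca x y) ∧
      ∀ w, T.le x w → T.le y w → T.le (T.lca x y) w := by
  have : Nonempty T.V := ⟨T.root⟩
  exact Classical.epsilon_spec (T.lca_exists x y)

lemma lca_ne_root {x y : T.V} (hx : x ≠ T.root) (hy : y ≠ T.root) :
    T.lca x y ≠ T.root := by
  intro h
  have hle : T.le (T.lca x y) T.rho :=
    (T.lca_spec x y).2.2 T.rho (T.le_rho' hx) (T.le_rho' hy)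
  rw [h] at hle
  obtain ⟨n, hn⟩ := hle
  rw [T.iterate_root] at hn
  exact T.rho_ne_root hn.symm

lemma lt_lca {x y : T.V} (hx : T.isLeaf x) (hxy : x ≠ y) : T.lt x (T.lca x y) := by
  refine ⟨(T.lca_spec x y).1, ?_⟩
  intro h
  have hylca : T.le y (T.lca x y) := (T.lca_spec x y).2.1
  rw [← h] at hylca
  exact hxy (T.le_leaf' hx hylca).symm

end PPTree

/-- For every generic relaxed σ-scenario
`𝒮 = (T,S,μ,τ_T,τ_S,σ)`, the strict quasi-orthology graph coincides with
the EDT graph, and `Θs(𝒮) ⊆ Ψs(𝒮) = 𝔈(𝒮) ⊆ Ψw(𝒮)`. -/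
theorem generic_scenario_edt_chain
    (T S : PPTree) (μ : T.V → S.VE) (τT : T.V → ℝ) (τS : S.V → ℝ)
    (σ : T.V → S.V)
    (hsc : IsRelaxedScenario T S μ τT τS) (hσ : SigmaCompat T S μ σ)
    (hgen : IsGeneric T S μ τT τS) :
    (∀ x y : T.V, StrictQuasiOrtholog T S μ σ x y ↔ EDTEdge T S τT τS σ x y) ∧
    (∀ x y : T.V, StrictOrtholog T S μ σ x y → StrictQuasiOrtholog T S μ σ x y) ∧
    (∀ x y : T.V, StrictQuasiOrtholog T S μ σ x y → WeakQuasiOrtholog T S μ x y) := by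
  classical
  have key : ∀ x y : T.V, T.isLeaf x → T.isLeaf y → x ≠ y →
      T.lt (T.lca x y) T.root := by
    intro x y hx hy hxy
    exact ⟨T.le_root' _, T.lca_ne_root (T.leaf_ne_root hx) (T.leaf_ne_root hy)⟩
  have hτroot : τS S.root = τT T.root :=
    hsc.S2 T.root S.root ((hsc.S0 T.root).mpr rfl)
  refine ⟨?_, fun x y h => h.1, ?_⟩
  · intro x y
    constructor
    · rintro ⟨hx, hy, hxy, hμ⟩
      exact ⟨hx, hy, hxy, (hsc.S2 _ _ hμ).symm⟩
    · rintro ⟨hx, hy, hxy, heq⟩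
      set u := S.lca (σ x) (σ y) with hu
      have hτc : τT x < τT (T.lca x y) := hsc.timeT x _ (T.lt_lca hx hxy)
      have hτx : τS (σ x) = τT x := hsc.S2 x (σ x) (hσ x hx)
      have hune : u ≠ S.root := by
        intro h
        have : τT (T.lca x y) < τT T.root := hsc.timeT _ _ (key x y hx hy hxy)
        rw [heq, h, hτroot] at this
        exact lt_irrefl _ this
      have hunl : ¬ S.isLeaf u := by
        intro h
        have hσxu : σ x = u := S.le_leaf' h (S.lca_spec (σ x) (σ y)).1
        rw [← hσxu, hτx] at heq
        exact lt_irrefl _ (heq ▸ hτc)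
      exact ⟨hx, hy, hxy, hgen x y hx hy u hune hunl heq⟩
  · rintro x y ⟨hx, hy, hxy, hμ⟩
    refine ⟨hx, hy, hxy, S.lca (σ x) (σ y), hμ, ?_, ?_⟩
    · intro h
      rw [h] at hμ
      have : T.lca x y = T.root := (hsc.S0 _).mp hμ
      exact (key x y hx hy hxy).2 this
    · intro h
      have hleaf : T.isLeaf (T.lca x y) := by
        have := (hsc.S1 (T.lca x y)).mp
        rw [hμ] at this
        exact this h
      exact (T.lt_lca hx hxy).2 (T.le_leaf' hleaf (T.lca_spec x y).1)
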